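/- arXiv:1612.07915 — 2 statements merged into one kernel-verified Lean document; each statement's English description precedes it below -/
import Mathlib

section
/- Let P be a nonempty polyhedral set in ℝ^d, x ∈ ℝ^d, and suppose (G_1,H_1) and (G_2,H_2) are two distinct pairs of nonempty faces with G_i ⊆ H_i, G_i ≠ H_i, and x ∈ relint G_i - relint N(P,H_i) for i = 1,2. Then the face intervals I(G_1,H_1) = {F face : G_1 ⊆ F ⊆ H_1} and I(G_2,H_2) are disjoint. -/
open RealInnerProductSpace Pointwise

noncomputable section

abbrev Euc (d : ℕ) := EuclideanSpace ℝ (Fin d)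

/-- A polyhedral set: intersection of finitely many closed half-spaces. -/
def IsPolyhedral {d : ℕ} (P : Set (Euc d)) : Prop :=
  ∃ s : Finset (Euc d × ℝ), P = {x | ∀ h ∈ s, ⟪h.1, x⟫ ≤ h.2}

/-- A (nonempty) face of a convex set: a nonempty convex extreme subset. -/
def IsFaceOf {d : ℕ} (P F : Set (Euc d)) : Prop :=
  F.Nonempty ∧ Convex ℝ F ∧ IsExtreme ℝ P F

/-- The normal cone of `P` at the face `F`. -/
def normalCone {d : ℕ} (P F : Set (Euc d)) : Set (Euc d) :=
  {u | ∀ f ∈ F, ∀ z ∈ P, ⟪u, z - f⟫ ≤ 0}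

/-- The dimension of a set: the rank of the direction of its affine hull. -/
def sdim {d : ℕ} (F : Set (Euc d)) : ℕ :=
  Module.finrank ℝ (affineSpan ℝ F).direction

/-- φ_P(x) = Σ_{F face of P} (-1)^{dim F} 1_{F - N(P,F)}(x). -/
def phi {d : ℕ} (P : Set (Euc d)) (x : Euc d) : ℤ :=
  ∑ᶠ F ∈ {F : Set (Euc d) | IsFaceOf P F},
    (-1 : ℤ) ^ sdim F * (F - normalCone P F).indicator (fun _ => (1 : ℤ)) x

/-- A set is line-free if it contains no affine line. -/
def LineFree {d : ℕ} (P : Set (Euc d)) : Prop :=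
  ∀ x y : Euc d, y ≠ 0 → ∃ t : ℝ, x + t • y ∉ P

/-- From a relative-interior point, any segment into the set can be extended. -/
lemma relint_extend {d : ℕ} {C : Set (Euc d)} {c y : Euc d}
    (hc : c ∈ intrinsicInterior ℝ C) (hy : y ∈ C) :
    ∃ z ∈ C, ∃ t : ℝ, 0 < t ∧ t < 1 ∧ c = (1 - t) • y + t • z := by
  obtain ⟨c', hc'int, rfl⟩ := mem_intrinsicInterior.mp hc
  have hcC : (c' : Euc d) ∈ C := intrinsicInterior_subset hc
  obtain ⟨ε, hε, hball⟩ := Metric.mem_nhds_iff.mp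
    ((isOpen_interior.mem_nhds hc'int) : _ ∈ nhds c')
  set s : ℝ := ε / (2 * (‖(c' : Euc d) - y‖ + 1)) with hs_def
  have hden : (0:ℝ) < ‖(c' : Euc d) - y‖ + 1 := by positivity
  have hs : 0 < s := by positivity
  have hymem : y ∈ affineSpan ℝ C := subset_affineSpan ℝ C hy
  have hzmem : s • ((c' : Euc d) - y) + (c' : Euc d) ∈ affineSpan ℝ C := by
    have := (affineSpan ℝ C).smul_vsub_vadd_mem s c'.2 hymem c'.2
    simpa [vsub_eq_sub, vadd_eq_add] using this
  set z' : affineSpan ℝ C := ⟨s • ((c' : Euc d) - y) + (c' : Euc d), hzmem⟩ with hz'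
  have hdist : dist z' c' < ε := by
    rw [Subtype.dist_eq]
    simp only [hz', dist_eq_norm]
    rw [add_sub_cancel_right, norm_smul]
    rw [Real.norm_eq_abs, abs_of_pos hs]
    calc s * ‖(c' : Euc d) - y‖ ≤ s * (‖(c' : Euc d) - y‖ + 1) := by nlinarith [hs]
    _ = ε / 2 := by rw [hs_def, div_mul_eq_mul_div, mul_div_mul_right _ _ hden.ne']
    _ < ε := by linarith
  have hzC : (z' : Euc d) ∈ C := by
    have := hball hdist
    exact Set.mem_preimage.mp (interior_subset this)
  refine ⟨z', hzC, 1 / (1 + s), by positivity, ?_, ?_⟩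
  · rw [div_lt_one (by linarith)]; linarith
  · have h1s : (1 : ℝ) + s ≠ 0 := by positivity
    show (c' : Euc d) = _ • y + _ • (s • ((c' : Euc d) - y) + (c' : Euc d))
    match_scalars <;> (field_simp; try ring)

/-- A face of a polyhedron equals the subset of `P` where all constraints active at a
relative-interior point of the face are equalities. -/
lemma face_eq_active {d : ℕ} {s : Finset (Euc d × ℝ)} {P F : Set (Euc d)}
    (hPs : P = {x | ∀ h ∈ s, ⟪h.1, x⟫ ≤ h.2}) (hF : IsFaceOf P F)
    {c : Euc d} (hc : c ∈ intrinsicInterior ℝ F) :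
    F = {x ∈ P | ∀ h ∈ s, ⟪h.1, c⟫ = h.2 → ⟪h.1, x⟫ = h.2} := by
  have hFP : F ⊆ P := hF.2.2.1
  have hcF : c ∈ F := intrinsicInterior_subset hc
  apply Set.Subset.antisymm
  · intro y hyF
    refine ⟨hFP hyF, fun h hh hact => ?_⟩
    obtain ⟨z, hzF, t, ht0, ht1, hct⟩ := relint_extend hc hyF
    have hy' : ⟪h.1, y⟫ ≤ h.2 := by
      have := hFP hyF; rw [hPs] at this; exact this h hh
    have hz' : ⟪h.1, z⟫ ≤ h.2 := by
      have := hFP hzF; rw [hPs] at this; exact this h hh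
    have hcc : (1 - t) * ⟪h.1, y⟫ + t * ⟪h.1, z⟫ = h.2 := by
      rw [← hact, hct, inner_add_right, real_inner_smul_right, real_inner_smul_right]
    nlinarith
  · rintro z ⟨hzP, hzact⟩
    by_cases hzc : z = c
    · rwa [hzc]
    have hev : ∀ᶠ t : ℝ in nhdsWithin 0 (Set.Ioi 0),
        c + t • (c - z) ∈ P ∧ 0 < t := by
      refine Filter.Eventually.and ?_ (eventually_mem_nhdsWithin)
      rw [hPs]
      have : ∀ᶠ t : ℝ in nhdsWithin 0 (Set.Ioi 0), ∀ h ∈ s, ⟪h.1, c + t • (c - z)⟫ ≤ h.2 := by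
        rw [Filter.eventually_all_finset]
        intro h hh
        have hcP : ⟪h.1, c⟫ ≤ h.2 := by
          have := hFP hcF; rw [hPs] at this; exact this h hh
        rcases eq_or_lt_of_le hcP with heq | hlt
        · have hz2 := hzact h hh heq
          filter_upwards with t
          rw [inner_add_right, real_inner_smul_right, inner_sub_right, heq, hz2]
          simp
        · have hcont : Filter.Tendsto (fun t : ℝ => ⟪h.1, c⟫ + t * ⟪h.1, c - z⟫)
              (nhdsWithin 0 (Set.Ioi 0)) (nhds ⟪h.1, c⟫) := by
            have : Filter.Tendsto (fun t : ℝ => ⟪h.1, c⟫ + t * ⟪h.1, c - z⟫)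
                (nhds 0) (nhds (⟪h.1, c⟫ + 0 * ⟪h.1, c - z⟫)) := by
              exact (continuous_const.add (continuous_id.mul continuous_const)).tendsto 0
            simpa using this.mono_left nhdsWithin_le_nhds
          have := hcont.eventually_lt_const hlt
          filter_upwards [this] with t ht
          rw [inner_add_right, real_inner_smul_right]
          exact le_of_lt ht
      exact this
    obtain ⟨t, htP, ht0⟩ := hev.exists
    have hseg : c ∈ openSegment ℝ z (c + t • (c - z)) := by
      refine ⟨t / (1 + t), 1 / (1 + t), by positivity, by positivity, ?_, ?_⟩
      · field_simp; ring
      · have h1t : (1 : ℝ) + t ≠ 0 := by positivity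
        match_scalars <;> (field_simp; try ring)
    exact (hF.2.2.2 hzP htP hcF hseg)

/-- Two faces sharing a relative-interior point coincide. -/
lemma face_eq_of_mem_relint {d : ℕ} {P F₁ F₂ : Set (Euc d)} (hP : IsPolyhedral P)
    (hF₁ : IsFaceOf P F₁) (hF₂ : IsFaceOf P F₂) {c : Euc d}
    (hc₁ : c ∈ intrinsicInterior ℝ F₁) (hc₂ : c ∈ intrinsicInterior ℝ F₂) : F₁ = F₂ := by
  obtain ⟨s, hPs⟩ := hP
  rw [face_eq_active hPs hF₁ hc₁, face_eq_active hPs hF₂ hc₂]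

/-- The normal cone is convex. -/
lemma normalCone_convex {d : ℕ} (P H : Set (Euc d)) : Convex ℝ (normalCone P H) := by
  intro u hu v hv a b ha hb hab
  intro f hf z hz
  have h1 := hu f hf z hz
  have h2 := hv f hf z hz
  rw [inner_add_left, real_inner_smul_left, real_inner_smul_left]
  nlinarith

/-- There is a normal vector at a face which is strictly separating. -/
lemma exists_strict_normal {d : ℕ} {P H : Set (Euc d)} (hP : IsPolyhedral P)
    (hH : IsFaceOf P H) :
    ∃ v ∈ normalCone P H, ∀ z ∈ P, z ∉ H → ∀ f ∈ H, ⟪v, z - f⟫ < 0 := by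
  classical
  obtain ⟨s, hPs⟩ := hP
  obtain ⟨c, hc⟩ := Set.Nonempty.intrinsicInterior hH.2.1 hH.1
  have hface := face_eq_active hPs hH hc
  set v : Euc d := ∑ h ∈ s, if ⟪h.1, c⟫ = h.2 then h.1 else 0 with hv
  have hinner : ∀ w : Euc d, ⟪v, w⟫ = ∑ h ∈ s, if ⟪h.1, c⟫ = h.2 then ⟪h.1, w⟫ else 0 := by
    intro w
    rw [hv, sum_inner]
    refine Finset.sum_congr rfl fun h hh => ?_
    split_ifs <;> simp
  have hterm : ∀ f ∈ H, ∀ z ∈ P, ∀ h ∈ s, ⟪h.1, c⟫ = h.2 → ⟪h.1, z - f⟫ ≤ 0 := by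
    intro f hf z hz h hh hact
    rw [hface] at hf
    have hfe : ⟪h.1, f⟫ = h.2 := hf.2 h hh hact
    have hzle : ⟪h.1, z⟫ ≤ h.2 := by rw [hPs] at hz; exact hz h hh
    rw [inner_sub_right, hfe]
    linarith
  refine ⟨v, ?_, ?_⟩
  · intro f hf z hz
    rw [hinner]
    refine Finset.sum_nonpos fun h hh => ?_
    split_ifs with hact
    · exact hterm f hf z hz h hh hact
    · exact le_refl 0
  · intro z hz hzH f hf
    rw [hinner]
    have hzE : ¬ (∀ h ∈ s, ⟪h.1, c⟫ = h.2 → ⟪h.1, z⟫ = h.2) := by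
      intro hcon
      exact hzH (hface ▸ ⟨hz, hcon⟩)
    push_neg at hzE
    obtain ⟨h₀, hh₀, hact₀, hne₀⟩ := hzE
    have hzle : ⟪h₀.1, z⟫ ≤ h₀.2 := by rw [hPs] at hz; exact hz h₀ hh₀
    have hstrict : ⟪h₀.1, z - f⟫ < 0 := by
      rw [hface] at hf
      have hfe : ⟪h₀.1, f⟫ = h₀.2 := hf.2 h₀ hh₀ hact₀
      rw [inner_sub_right, hfe]
      cases lt_or_eq_of_le hzle with
      | inl h => linarith
      | inr h => exact absurd h hne₀
    have : ∑ h ∈ s, (if ⟪h.1, c⟫ = h.2 then ⟪h.1, z - f⟫ else 0) <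
        ∑ h ∈ s, (0 : ℝ) := by
      refine Finset.sum_lt_sum (fun h hh => ?_) ⟨h₀, hh₀, ?_⟩
      · split_ifs with hact
        · exact hterm f hf z hz h hh hact
        · exact le_refl 0
      · rw [if_pos hact₀]; exact hstrict
    simpa using this

/-- Faces whose normal cones share a relative-interior point coincide. -/
lemma face_eq_of_relint_normalCone {d : ℕ} {P H₁ H₂ : Set (Euc d)} (hP : IsPolyhedral P)
    (hH₁ : IsFaceOf P H₁) (hH₂ : IsFaceOf P H₂) {u : Euc d}
    (hu₁ : u ∈ intrinsicInterior ℝ (normalCone P H₁))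
    (hu₂ : u ∈ intrinsicInterior ℝ (normalCone P H₂)) : H₁ = H₂ := by
  have key : ∀ (A B : Set (Euc d)), IsFaceOf P A → IsFaceOf P B →
      u ∈ intrinsicInterior ℝ (normalCone P A) → u ∈ intrinsicInterior ℝ (normalCone P B) →
      A ⊆ B := by
    intro A B hA hB huA huB z hzA
    by_contra hzB
    have huAn : u ∈ normalCone P A := intrinsicInterior_subset huA
    have huBn : u ∈ normalCone P B := intrinsicInterior_subset huB
    have hzP : z ∈ P := hA.2.2.1 hzA
    obtain ⟨f₂, hf₂⟩ := hB.1
    have hf₂P : f₂ ∈ P := hB.2.2.1 hf₂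
    have hle1 : ⟪u, z - f₂⟫ ≤ 0 := huBn f₂ hf₂ z hzP
    have hle2 : ⟪u, f₂ - z⟫ ≤ 0 := huAn z hzA f₂ hf₂P
    have heq : ⟪u, z - f₂⟫ = 0 := by
      have : ⟪u, z - f₂⟫ = -⟪u, f₂ - z⟫ := by
        rw [← inner_neg_right]; congr 1; abel
      linarith [this ▸ hle1, hle2, this]
    obtain ⟨v, hvN, hvstrict⟩ := exists_strict_normal hP hB
    obtain ⟨w, hwN, t, ht0, ht1, hut⟩ := relint_extend huB hvN
    have hv0 : ⟪v, z - f₂⟫ < 0 := hvstrict z hzP hzB f₂ hf₂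
    have hw0 : ⟪w, z - f₂⟫ ≤ 0 := hwN f₂ hf₂ z hzP
    have : ⟪u, z - f₂⟫ = (1 - t) * ⟪v, z - f₂⟫ + t * ⟪w, z - f₂⟫ := by
      rw [hut, inner_add_left, real_inner_smul_left, real_inner_smul_left]
    nlinarith
  exact Set.Subset.antisymm (key H₁ H₂ hH₁ hH₂ hu₁ hu₂) (key H₂ H₁ hH₂ hH₁ hu₂ hu₁)

theorem face_intervals_disjoint {d : ℕ} (P : Set (Euc d))
    (hP : IsPolyhedral P) (hne : P.Nonempty) (x : Euc d)
    (G₁ H₁ G₂ H₂ : Set (Euc d))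
    (hG₁ : IsFaceOf P G₁) (hH₁ : IsFaceOf P H₁) (h₁ : G₁ ⊆ H₁) (hne₁ : G₁ ≠ H₁)
    (hx₁ : x ∈ intrinsicInterior ℝ G₁ - intrinsicInterior ℝ (normalCone P H₁))
    (hG₂ : IsFaceOf P G₂) (hH₂ : IsFaceOf P H₂) (h₂ : G₂ ⊆ H₂) (hne₂ : G₂ ≠ H₂)
    (hx₂ : x ∈ intrinsicInterior ℝ G₂ - intrinsicInterior ℝ (normalCone P H₂))
    (hpair : (G₁, H₁) ≠ (G₂, H₂)) :
    Disjoint {F : Set (Euc d) | IsFaceOf P F ∧ G₁ ⊆ F ∧ F ⊆ H₁}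
      {F : Set (Euc d) | IsFaceOf P F ∧ G₂ ⊆ F ∧ F ⊆ H₂} := by
  rw [Set.disjoint_left]
  rintro F ⟨hF, hG₁F, hFH₁⟩ ⟨hF', hG₂F, hFH₂⟩
  obtain ⟨g₁, hg₁, u₁, hu₁, hx₁e⟩ := Set.mem_sub.mp hx₁
  obtain ⟨g₂, hg₂, u₂, hu₂, hx₂e⟩ := Set.mem_sub.mp hx₂
  have hg₁G : g₁ ∈ G₁ := intrinsicInterior_subset hg₁
  have hg₂G : g₂ ∈ G₂ := intrinsicInterior_subset hg₂
  have hu₁N : u₁ ∈ normalCone P H₁ := intrinsicInterior_subset hu₁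
  have hu₂N : u₂ ∈ normalCone P H₂ := intrinsicInterior_subset hu₂
  have hg₁P : g₁ ∈ P := hH₁.2.2.1 (h₁ hg₁G)
  have hg₂P : g₂ ∈ P := hH₂.2.2.1 (h₂ hg₂G)
  -- g₂ ∈ H₁ and g₁ ∈ H₂ via the common face F
  have hg₂H₁ : g₂ ∈ H₁ := hFH₁ (hG₂F hg₂G)
  have hg₁H₂ : g₁ ∈ H₂ := hFH₂ (hG₁F hg₁G)
  have A1 : ⟪u₁, g₁ - g₂⟫ ≤ 0 := hu₁N g₂ hg₂H₁ g₁ hg₁P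
  have B1 : ⟪u₂, g₂ - g₁⟫ ≤ 0 := hu₂N g₁ hg₁H₂ g₂ hg₂P
  have hdiff : g₁ - g₂ = u₁ - u₂ := by
    have h := hx₁e.trans hx₂e.symm
    have h0 : g₁ - u₁ - (g₂ - u₂) = 0 := sub_eq_zero.mpr h
    have h2 : g₁ - g₂ - (u₁ - u₂) = 0 := by rw [← h0]; abel
    exact sub_eq_zero.mp h2
  have hnorm : ⟪g₁ - g₂, g₁ - g₂⟫ ≤ 0 := by
    nth_rewrite 1 [hdiff]
    rw [inner_sub_left]
    have hneg : ⟪u₂, g₁ - g₂⟫ = -⟪u₂, g₂ - g₁⟫ := by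
      rw [← inner_neg_right]; congr 1; abel
    linarith [A1, B1, hneg]
  have hgeq : g₁ = g₂ := sub_eq_zero.mp (real_inner_self_nonpos.mp hnorm)
  have hueq : u₁ = u₂ := by
    have h3 := hdiff
    rw [hgeq, sub_self] at h3
    exact sub_eq_zero.mp h3.symm
  rw [← hgeq] at hg₂
  rw [← hueq] at hu₂
  have hGeq : G₁ = G₂ := face_eq_of_mem_relint hP hG₁ hG₂ hg₁ hg₂
  have hHeq : H₁ = H₂ := face_eq_of_relint_normalCone hP hH₁ hH₂ hu₁ hu₂
  exact hpair (by rw [hGeq, hHeq])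
end
end

section
/- Let P be a polyhedral set in ℝ^d and let W be a polytope such that the interior of W meets the relative interior of a face F of P. Then F ∩ W is a face of P ∩ W and N(P, F) = N(P ∩ W, F ∩ W). -/
open RealInnerProductSpace Pointwise

noncomputable section

lemma IsPolyhedral.convex {d : ℕ} {P : Set (Euc d)} (h : IsPolyhedral P) : Convex ℝ P := by
  obtain ⟨s, rfl⟩ := h
  intro x hx y hy a b ha hb hab hh hhs
  have hx' := hx hh hhs
  have hy' := hy hh hhs
  simp only [Set.mem_setOf_eq] at *
  rw [inner_add_right, real_inner_smul_right, real_inner_smul_right]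
  calc a * ⟪hh.1, x⟫ + b * ⟪hh.1, y⟫
      ≤ a * hh.2 + b * hh.2 :=
        add_le_add (mul_le_mul_of_nonneg_left hx' ha) (mul_le_mul_of_nonneg_left hy' hb)
    _ = hh.2 := by rw [← add_mul, hab, one_mul]

lemma push_beyond {d : ℕ} {F : Set (Euc d)} {x₀ f : Euc d}
    (hx₀ : x₀ ∈ intrinsicInterior ℝ F) (hf : f ∈ F) :
    ∃ δ : ℝ, 0 < δ ∧ x₀ + δ • (x₀ - f) ∈ F := by
  obtain ⟨y₀, hy₀, hy₀x⟩ := mem_intrinsicInterior.mp hx₀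
  have hx₀span : x₀ ∈ affineSpan ℝ F := hy₀x ▸ y₀.2
  have hfspan : f ∈ affineSpan ℝ F := subset_affineSpan ℝ F hf
  have hmem : ∀ t : ℝ, f + t • (x₀ - f) ∈ affineSpan ℝ F := by
    intro t
    have := AffineSubspace.smul_vsub_vadd_mem (affineSpan ℝ F) t hx₀span hfspan hfspan
    simpa [vsub_eq_sub, vadd_eq_add, add_comm] using this
  set c : ℝ → (affineSpan ℝ F : Set (Euc d)) := fun t => ⟨f + t • (x₀ - f), hmem t⟩ with hc
  have hcont : Continuous c := by
    apply Continuous.subtype_mk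
    continuity
  have hc1 : c 1 = y₀ := by
    apply Subtype.ext
    show f + (1:ℝ) • (x₀ - f) = (y₀ : Euc d)
    rw [hy₀x, one_smul]
    abel
  have hopen : IsOpen (c ⁻¹' interior ((↑) ⁻¹' F : Set (affineSpan ℝ F))) :=
    isOpen_interior.preimage hcont
  have h1mem : (1 : ℝ) ∈ c ⁻¹' interior ((↑) ⁻¹' F : Set (affineSpan ℝ F)) := by
    simp [hc1, hy₀]
  obtain ⟨ε, hε, hball⟩ := Metric.isOpen_iff.mp hopen 1 h1mem
  refine ⟨ε / 2, by linarith, ?_⟩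
  have ht : (1 + ε / 2) ∈ Metric.ball (1 : ℝ) ε := by
    rw [Metric.mem_ball, Real.dist_eq, show (1 + ε/2 - 1 : ℝ) = ε/2 by ring,
      abs_of_nonneg (by linarith)]
    linarith
  have := interior_subset (hball ht)
  simp only [Set.mem_preimage, hc] at this
  have h2 : f + (1 + ε / 2) • (x₀ - f) = x₀ + (ε / 2) • (x₀ - f) := by
    rw [add_smul, one_smul]
    abel
  rwa [h2] at this

theorem normalCone_intersect_polytope {d : ℕ} (Pp W F : Set (Euc d))
    (hP : IsPolyhedral Pp) (hW : IsPolyhedral W) (hWb : Bornology.IsBounded W)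
    (hF : IsFaceOf Pp F)
    (hmeet : (intrinsicInterior ℝ F ∩ interior W).Nonempty) :
    IsFaceOf (Pp ∩ W) (F ∩ W) ∧ normalCone Pp F = normalCone (Pp ∩ W) (F ∩ W) := by
  obtain ⟨x₀, hx₀I, hx₀W⟩ := hmeet
  obtain ⟨hFne, hFconv, hFext⟩ := hF
  have hFP : F ⊆ Pp := hFext.1
  have hx₀F : x₀ ∈ F := intrinsicInterior_subset hx₀I
  have hx₀P : x₀ ∈ Pp := hFP hx₀F
  have hx₀W' : x₀ ∈ W := interior_subset hx₀W
  have hPconv := hP.convex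
  constructor
  · refine ⟨⟨x₀, hx₀F, hx₀W'⟩, hFconv.inter hW.convex, ?_, ?_⟩
    · exact Set.inter_subset_inter_left W hFP
    · rintro x₁ ⟨hx₁P, hx₁W⟩ x₂ ⟨hx₂P, hx₂W⟩ x ⟨hxF, hxW⟩ hseg
      obtain h1 := hFext.2 hx₁P hx₂P hxF hseg
      exact ⟨h1, hx₁W⟩
  · apply Set.Subset.antisymm
    · intro u hu f hfFW z hzPW
      exact hu f hfFW.1 z hzPW.1
    · intro u hu f hfF z hzP
      -- step 1: ⟪u, z - x₀⟫ ≤ 0 for all z ∈ Pp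
      have key : ∀ z ∈ Pp, ⟪u, z - x₀⟫ ≤ 0 := by
        intro z hz
        have hcont : Continuous fun t : ℝ => x₀ + t • (z - x₀) := by continuity
        have hopen : IsOpen ((fun t : ℝ => x₀ + t • (z - x₀)) ⁻¹' interior W) :=
          isOpen_interior.preimage hcont
        have h0 : (0 : ℝ) ∈ (fun t : ℝ => x₀ + t • (z - x₀)) ⁻¹' interior W := by
          simpa using hx₀W
        obtain ⟨ε, hε, hball⟩ := Metric.isOpen_iff.mp hopen 0 h0
        set t := min (ε / 2) (1 / 2) with htdef
        have ht0 : 0 < t := lt_min (by linarith) (by norm_num)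
        have ht1 : t ≤ 1 := le_trans (min_le_right _ _) (by norm_num)
        have htball : t ∈ Metric.ball (0 : ℝ) ε := by
          rw [Metric.mem_ball, Real.dist_eq, sub_zero, abs_of_pos ht0]
          exact lt_of_le_of_lt (min_le_left _ _) (by linarith)
        have hctW : x₀ + t • (z - x₀) ∈ W := interior_subset (hball htball)
        have hctP : x₀ + t • (z - x₀) ∈ Pp := by
          have := hPconv hx₀P hz (by linarith : (0:ℝ) ≤ 1 - t) ht0.le (by ring)
          have heq : (1 - t) • x₀ + t • z = x₀ + t • (z - x₀) := by
            rw [sub_smul, one_smul, smul_sub]; abel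
          rwa [heq] at this
        have := hu x₀ ⟨hx₀F, hx₀W'⟩ _ ⟨hctP, hctW⟩
        rw [add_sub_cancel_left, real_inner_smul_right] at this
        nlinarith [this, ht0]
      -- step 2: ⟪u, f - x₀⟫ = 0
      have hle : ⟪u, f - x₀⟫ ≤ 0 := key f (hFP hfF)
      obtain ⟨δ, hδ, hδmem⟩ := push_beyond hx₀I hfF
      have hge : 0 ≤ ⟪u, f - x₀⟫ := by
        have := key _ (hFP hδmem)
        rw [add_sub_cancel_left, real_inner_smul_right] at this
        have h2 : ⟪u, x₀ - f⟫ ≤ 0 := by nlinarith [this, hδ]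
        have h3 : ⟪u, x₀ - f⟫ = -⟪u, f - x₀⟫ := by
          rw [← inner_neg_right]; congr 1; abel
        linarith [h3 ▸ h2]
      have heq : z - f = (z - x₀) + (x₀ - f) := by abel
      rw [heq, inner_add_right]
      have h4 : ⟪u, x₀ - f⟫ = -⟪u, f - x₀⟫ := by
        rw [← inner_neg_right]; congr 1; abel
      linarith [key z hzP, h4, hle, hge]
end
end
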